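/- For any finitely presented R-module A and pure acyclic complex F• of R-modules, every chain map A[-n] → F• (A concentrated in degree n) is null-homotopic, for every integer n. -/

import Mathlib

open CategoryTheory Limits
open TensorProduct

lemma pure_lift {R : Type} [CommRing R] {M N A : Type} [AddCommGroup M] [Module R M]
    [AddCommGroup N] [Module R N] [AddCommGroup A] [Module R A]
    [Module.FinitePresentation R A]
    (p : M →ₗ[R] N) (hp : Function.Surjective p)
    (pure : ∀ (X : Type) [AddCommGroup X] [Module R X],
      Function.Injective (LinearMap.lTensor X (LinearMap.ker p).subtype))
    (g : A →ₗ[R] N) : ∃ h : A →ₗ[R] M, p ∘ₗ h = g := by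
  classical
  obtain ⟨k, π, hπ⟩ := Module.Finite.exists_fin' R A
  have hfg : (LinearMap.ker π).FG := Module.FinitePresentation.fg_ker π hπ
  obtain ⟨m, s, hs⟩ := Submodule.fg_iff_exists_fin_generating_family.mp hfg
  have hsker : ∀ j, s j ∈ LinearMap.ker π := by
    intro j; rw [← hs]; exact Submodule.subset_span ⟨j, rfl⟩
  choose x hx using fun i : Fin k => hp (g (π (Pi.single i 1)))
  set K := LinearMap.ker p with hK
  set h0 : (Fin k → R) →ₗ[R] M := Fintype.linearCombination R x with hh0
  have ph0 : ∀ v, p (h0 v) = g (π v) := by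
    intro v
    have : (p ∘ₗ h0) = (g ∘ₗ π) := by
      apply Module.Basis.ext (Pi.basisFun R (Fin k))
      intro i
      simp [hh0, Pi.basisFun_apply, hx]
    exact DFunLike.congr_fun this v
  have hb : ∀ j, h0 (s j) ∈ K := fun j => by
    rw [hK, LinearMap.mem_ker, ph0, LinearMap.mem_ker.mp (hsker j), map_zero]
  set b : Fin m → K := fun j => ⟨h0 (s j), hb j⟩ with hbdef
  set T : (Fin k → R) →ₗ[R] (Fin m → R) :=
    LinearMap.pi (fun j => Fintype.linearCombination R (fun i => s j i)) with hT
  set X := (Fin m → R) ⧸ LinearMap.range T with hX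
  set mk : (Fin m → R) →ₗ[R] X := (LinearMap.range T).mkQ with hmk
  set U : (Fin m → R) ⊗[R] K := ∑ j, (Pi.single j (1:R) : Fin m → R) ⊗ₜ b j with hUdef
  have hUM : (LinearMap.lTensor X K.subtype) ((LinearMap.rTensor K mk) U) = 0 := by
    have h1 : (LinearMap.lTensor X K.subtype) ((LinearMap.rTensor K mk) U)
        = ∑ j, mk (Pi.single j (1:R)) ⊗ₜ[R] (h0 (s j)) := by
      rw [hUdef, map_sum, map_sum]
      refine Finset.sum_congr rfl fun j _ => ?_
      rw [LinearMap.rTensor_tmul, LinearMap.lTensor_tmul]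
      rfl
    rw [h1]
    have h2 : ∀ j, h0 (s j) = ∑ i, s j i • x i := fun j => rfl
    calc ∑ j, mk (Pi.single j (1:R)) ⊗ₜ[R] (h0 (s j))
        = ∑ j, ∑ i, mk (Pi.single j (1:R)) ⊗ₜ[R] (s j i • x i) := by
          refine Finset.sum_congr rfl fun j _ => ?_
          rw [h2 j, TensorProduct.tmul_sum]
      _ = ∑ i, ∑ j, mk (s j i • (Pi.single j (1:R) : Fin m → R)) ⊗ₜ[R] x i := by
          rw [Finset.sum_comm]
          refine Finset.sum_congr rfl fun i _ => Finset.sum_congr rfl fun j _ => ?_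
          rw [TensorProduct.tmul_smul, TensorProduct.smul_tmul', ← map_smul]
      _ = ∑ i, mk (∑ j, s j i • (Pi.single j (1:R) : Fin m → R)) ⊗ₜ[R] x i := by
          refine Finset.sum_congr rfl fun i _ => ?_
          rw [map_sum, TensorProduct.sum_tmul]
      _ = 0 := by
          refine Finset.sum_eq_zero fun i _ => ?_
          have he : (∑ j, s j i • (Pi.single j (1:R) : Fin m → R))
              = T (Pi.single i 1) := by
            ext j'
            simp [hT, Fintype.linearCombination_apply, Pi.single_apply]
          rw [he]
          have hz : mk (T (Pi.single i 1)) = 0 := by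
            rw [hmk, Submodule.mkQ_apply, Submodule.Quotient.mk_eq_zero]
            exact ⟨_, rfl⟩
          rw [hz, TensorProduct.zero_tmul]
  have hU0 : (LinearMap.rTensor K mk) U = 0 := by
    apply pure X
    rw [hUM, map_zero]
  have hexact : Function.Exact T mk := by
    rw [LinearMap.exact_iff]
    exact Submodule.ker_mkQ _
  have hexact' : Function.Exact (LinearMap.rTensor K T) (LinearMap.rTensor K mk) :=
    rTensor_exact K hexact (Submodule.mkQ_surjective _)
  obtain ⟨w, hw⟩ := (hexact' U).mp hU0
  obtain ⟨S, hS⟩ := TensorProduct.exists_finset w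
  set y : Fin k → K := fun i => ∑ t ∈ S, t.1 i • t.2 with hy
  have hby : ∀ j, b j = ∑ i, s j i • y i := by
    intro j
    set φ : (Fin m → R) ⊗[R] K →ₗ[R] K :=
      (TensorProduct.lid R K).toLinearMap ∘ₗ LinearMap.rTensor K (LinearMap.proj j) with hφ
    have hφU : φ U = b j := by
      rw [hUdef, map_sum]
      have h6 : ∀ j', φ ((Pi.single j' (1:R) : Fin m → R) ⊗ₜ b j')
          = ((Pi.single j' (1:R) : Fin m → R) j) • b j' := by
        intro j'
        simp [hφ]
      simp only [h6, Pi.single_apply, ite_smul, one_smul, zero_smul,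
        Finset.sum_ite_eq, Finset.mem_univ, if_true]
    have hφw : φ (LinearMap.rTensor K T w) = ∑ i, s j i • y i := by
      rw [hS]
      simp only [map_sum, hφ, LinearMap.coe_comp, Function.comp_apply,
        LinearMap.rTensor_tmul, LinearEquiv.coe_coe, TensorProduct.lid_tmul]
      have hTt : ∀ t : (Fin k → R) × K, ((LinearMap.proj (R := R) j) (T t.1)) • t.2
          = ∑ i, s j i • (t.1 i • t.2) := by
        intro t
        have h7 : (LinearMap.proj (R := R) j) (T t.1) = ∑ i, t.1 i • s j i := rfl
        rw [h7, Finset.sum_smul]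
        refine Finset.sum_congr rfl fun i _ => ?_
        rw [smul_eq_mul, mul_comm (t.1 i) (s j i), mul_smul]
      calc ∑ t ∈ S, ((LinearMap.proj (R := R) j) (T t.1)) • t.2
          = ∑ t ∈ S, ∑ i, s j i • (t.1 i • t.2) :=
            Finset.sum_congr rfl fun t _ => hTt t
        _ = ∑ i, s j i • y i := by
            rw [Finset.sum_comm]
            refine Finset.sum_congr rfl fun i _ => ?_
            rw [hy, Finset.smul_sum]
    rw [← hφU, ← hw, hφw]
  set q : (Fin k → R) →ₗ[R] M := Fintype.linearCombination R (fun i => (y i : M)) with hqdef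
  have hqs : ∀ j, q (s j) = h0 (s j) := by
    intro j
    have h4 : ((∑ i, s j i • y i : K) : M) = ∑ i, s j i • (y i : M) := by
      push_cast
      rfl
    have h5 : q (s j) = ∑ i, s j i • (y i : M) := rfl
    have h8 : (b j : M) = h0 (s j) := rfl
    rw [h5, ← h4, ← hby j, h8]
  set h1 : (Fin k → R) →ₗ[R] M := h0 - q with hh1
  have hker : LinearMap.ker π ≤ LinearMap.ker h1 := by
    rw [← hs, Submodule.span_le]
    rintro _ ⟨j, rfl⟩
    simp only [SetLike.mem_coe, LinearMap.mem_ker, hh1, LinearMap.sub_apply, hqs j, sub_self]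
  set e := LinearMap.quotKerEquivOfSurjective π hπ with he
  refine ⟨(Submodule.liftQ _ h1 hker) ∘ₗ (e.symm : A →ₗ[R] _), ?_⟩
  apply LinearMap.ext
  intro a
  obtain ⟨v, rfl⟩ := hπ a
  have heq : e (Submodule.Quotient.mk v) = π v := rfl
  have heq' : e.symm (π v) = Submodule.Quotient.mk v := by
    rw [LinearEquiv.symm_apply_eq, heq]
  simp only [LinearMap.comp_apply, LinearEquiv.coe_coe, heq', Submodule.liftQ_apply]
  have hqv : p (q v) = 0 := by
    have h9 : q v = ∑ i, v i • (y i : M) := rfl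
    rw [h9, map_sum]
    refine Finset.sum_eq_zero fun i _ => ?_
    rw [map_smul, LinearMap.mem_ker.mp (y i).2, smul_zero]
  rw [hh1, LinearMap.sub_apply, map_sub, hqv, sub_zero, ph0]

lemma pure_transfer (R : Type) [CommRing R] (F : CochainComplex (ModuleCat R) ℤ)
    {a b c : ℤ} (h : b = c)
    (hp : ∀ (X : Type) [AddCommGroup X] [Module R X],
      Function.Injective (LinearMap.lTensor X (LinearMap.ker (F.d a b).hom).subtype)) :
    ∀ (X : Type) [AddCommGroup X] [Module R X],
      Function.Injective (LinearMap.lTensor X (LinearMap.ker (F.d a c).hom).subtype) := by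
  subst h; exact hp


/-- A cochain complex of modules is exact. -/
def CxExact (R : Type) [CommRing R] (C : CochainComplex (ModuleCat R) ℤ) : Prop :=
  ∀ n : ℤ, LinearMap.range (C.d (n - 1) n).hom = LinearMap.ker (C.d n (n + 1)).hom

/-- A cochain complex of modules is pure acyclic: it is exact and each cycle
short exact sequence `0 → Z^n → C^n → Z^{n+1} → 0` is pure exact, i.e. the
inclusion `Z^n → C^n` stays injective after tensoring with any module. -/
def PureAcyclic (R : Type) [CommRing R] (C : CochainComplex (ModuleCat R) ℤ) : Prop :=
  CxExact R C ∧
    ∀ (n : ℤ) (X : Type) [AddCommGroup X] [Module R X],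
      Function.Injective (LinearMap.lTensor X (LinearMap.ker (C.d n (n + 1)).hom).subtype)

/-- For a finitely presented module `A` and a pure acyclic complex `F•`, every
chain map `A[-n] → F•` (with `A` concentrated in degree `n`) is null-homotopic. -/
theorem stmt_12 (R : Type) [CommRing R] (F : CochainComplex (ModuleCat R) ℤ)
    (hpa : PureAcyclic R F)
    (A : Type) [AddCommGroup A] [Module R A] (hA : Module.FinitePresentation R A) :
    ∀ (n : ℤ)
      (f : (HomologicalComplex.single (ModuleCat R) (ComplexShape.up ℤ) n).obj
            (ModuleCat.of R A) ⟶ F),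
      Nonempty (Homotopy f 0) := by
  haveI := hA
  obtain ⟨hex, hpure⟩ := hpa
  intro n f
  set Z := LinearMap.ker (F.d n (n + 1)).hom with hZ
  have hmem : ∀ v : F.X (n - 1), (F.d (n - 1) n).hom v ∈ Z := by
    intro v
    rw [hZ, ← hex n]
    exact LinearMap.mem_range_self _ v
  set p : F.X (n - 1) →ₗ[R] Z := (F.d (n - 1) n).hom.codRestrict Z hmem with hpdef
  have hp : Function.Surjective p := by
    rintro ⟨z, hz⟩
    rw [hZ, ← hex n] at hz
    obtain ⟨v, hv⟩ := hz
    exact ⟨v, Subtype.ext hv⟩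
  have hkp : LinearMap.ker p = LinearMap.ker (F.d (n - 1) n).hom :=
    LinearMap.ker_codRestrict Z _ hmem
  have hnn : n - 1 + 1 = n := by ring
  have hpn := pure_transfer R F hnn (hpure (n - 1))
  rw [← hkp] at hpn
  set iso := HomologicalComplex.singleObjXSelf (ComplexShape.up ℤ) n (ModuleCat.of R A)
    with hiso
  set g0 : (ModuleCat.of R A) ⟶ F.X n := iso.inv ≫ f.f n with hg0def
  have hc : f.f n ≫ F.d n (n + 1) = 0 := by
    rw [f.comm n (n + 1), HomologicalComplex.single_obj_d, zero_comp]
  have hg0 : ∀ a : A, g0 a ∈ Z := by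
    intro a
    rw [hZ, LinearMap.mem_ker]
    have := congrArg (fun φ => ModuleCat.Hom.hom φ (iso.inv.hom a)) hc
    exact this
  set g' : A →ₗ[R] Z := LinearMap.codRestrict Z g0.hom hg0 with hg'def
  obtain ⟨ℓ, hℓ⟩ := pure_lift p hp hpn g'
  have hℓ' : ∀ a : A, F.d (n - 1) n (ℓ a) = g0 a := by
    intro a
    have := DFunLike.congr_fun hℓ a
    exact congrArg Subtype.val this
  have hcomp : (ModuleCat.ofHom ℓ : ModuleCat.of R A ⟶ F.X (n - 1)) ≫ F.d (n - 1) n = iso.inv ≫ f.f n := by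
    ext a
    exact hℓ' a
  refine ⟨{
    hom := fun i j =>
      if h : i = n ∧ j = n - 1 then
        (eqToHom (by rw [h.1]) :
          ((HomologicalComplex.single (ModuleCat R) (ComplexShape.up ℤ) n).obj
            (ModuleCat.of R A)).X i ⟶ _) ≫ iso.hom ≫
          (ModuleCat.ofHom ℓ : ModuleCat.of R A ⟶ F.X (n - 1)) ≫ (eqToHom (by rw [h.2]) : F.X (n - 1) ⟶ F.X j)
      else 0
    zero := ?_
    comm := ?_ }⟩
  · intro i j hnot
    split_ifs with h
    · exact absurd (show (ComplexShape.up ℤ).Rel j i by rw [ComplexShape.up_Rel, h.1, h.2]; ring)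
        hnot
    · rfl
  · intro i
    by_cases hi : i = n
    · subst hi
      rw [dNext_eq _ (show (ComplexShape.up ℤ).Rel i (i + 1) from rfl),
        HomologicalComplex.single_obj_d, zero_comp,
        prevD_eq _ (show (ComplexShape.up ℤ).Rel (i - 1) i from by rw [ComplexShape.up_Rel]; ring)]
      rw [dif_pos ⟨rfl, rfl⟩]
      simp only [eqToHom_refl, Category.id_comp, Category.comp_id, Category.assoc]
      rw [hcomp]
      simp
    · apply (HomologicalComplex.isZero_single_obj_X
        (ComplexShape.up ℤ) n (ModuleCat.of R A) i hi).eq_of_src
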